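/- Let G act trivially on an algebraically closed field K, and let 1 → A → Γ → G → 1 be an extension with A finite abelian satisfying: char(K) ∤ |A|, Hom_G(A,K*) = Hom(A,K*), and the transgression Hom_G(A,K*) → H²(G,K*) is an isomorphism. Then the extension is a stem extension: A is contained in the center of Γ and in the commutator subgroup [Γ,Γ]. -/

import Mathlib

section TwistedSchur

variable {G K : Type*} [Group G] [Field K]

/-- The action of `g ∈ G` on `Kˣ` induced by the action `φ` of `G` on the field `K`. -/
def uAct (φ : G →* (K ≃+* K)) (g : G) : Kˣ →* Kˣ :=
  Units.map (φ g).toRingHom.toMonoidHom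

/-- The twisted 2-coboundary `∂τ(g,h) = φ_g(τ h) · τ(gh)⁻¹ · τ g`. -/
def d1 (φ : G →* (K ≃+* K)) (τ : G → Kˣ) : G → G → Kˣ :=
  fun g h => uAct φ g (τ h) * (τ (g * h))⁻¹ * τ g

/-- The twisted 2-cocycle condition
`φ_g(α(h,k)) · α(gh,k)⁻¹ · α(g,hk) · α(g,h)⁻¹ = 1`. -/
def IsCocycle2 (φ : G →* (K ≃+* K)) (α : G → G → Kˣ) : Prop :=
  ∀ g h k, uAct φ g (α h k) * (α (g * h) k)⁻¹ * α g (h * k) * (α g h)⁻¹ = 1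

/-- The group `Z²(G,Kˣ)` of twisted 2-cocycles. -/
abbrev Z2 (φ : G →* (K ≃+* K)) : Subgroup (G → G → Kˣ) :=
  Subgroup.closure {α | IsCocycle2 φ α}

/-- The group `B²(G,Kˣ)` of twisted 2-coboundaries. -/
abbrev B2 (φ : G →* (K ≃+* K)) : Subgroup (G → G → Kˣ) :=
  Subgroup.closure (Set.range (d1 φ))

/-- The twisted Schur multiplier `H²(G,Kˣ) = Z²/B²`. -/
abbrev H2 (φ : G →* (K ≃+* K)) :=
  Z2 φ ⧸ ((B2 φ).subgroupOf (Z2 φ))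

end TwistedSchur

private lemma nat_aux {p o c r : ℕ} (hp : p.Prime) (ho : o ∣ c) (hc : c ≠ 0)
    (hr : p ^ c ∣ r) : ¬ p ∣ o / Nat.gcd o r := by
  intro hdvd
  have ho0 : o ≠ 0 := fun h => hc (Nat.eq_zero_of_zero_dvd (h ▸ ho))
  set s := o.factorization p with hs
  have hso : p ^ s ∣ o := Nat.ordProj_dvd o p
  have hsc : s ≤ c := by
    have h1 : p ^ s ∣ c := hso.trans ho
    have h2 : p ^ s ≤ c := Nat.le_of_dvd (Nat.pos_of_ne_zero hc) h1
    have h3 : s < p ^ s := Nat.lt_pow_self hp.one_lt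
    omega
  have hsg : p ^ s ∣ Nat.gcd o r := Nat.dvd_gcd hso ((pow_dvd_pow p hsc).trans hr)
  have hgo : Nat.gcd o r ∣ o := Nat.gcd_dvd_left o r
  have hps : p ^ (s + 1) ∣ o := by
    have h4 := Nat.mul_dvd_mul hsg hdvd
    rwa [Nat.mul_div_cancel' hgo, ← pow_succ] at h4
  have := (Nat.Prime.pow_dvd_iff_le_factorization hp ho0).mp hps
  omega

private lemma exists_char {K H : Type*} [Field K] [IsAlgClosed K] [CommGroup H] [Finite H]
    {x : H} (hx : x ≠ 1) (hd : ¬ ringChar K ∣ orderOf x) :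
    ∃ χ : H →* Kˣ, χ x ≠ 1 := by
  rcases CharP.char_is_prime_or_zero K (ringChar K) with hp | h0
  · -- prime characteristic case
    haveI : Fact (ringChar K).Prime := ⟨hp⟩
    set p := ringChar K with hpdef
    have hc0 : Nat.card H ≠ 0 := Nat.card_pos.ne'
    have hcop : Nat.Coprime (orderOf x) (p ^ Nat.card H) :=
      (((Nat.Prime.coprime_iff_not_dvd hp).mpr hd).symm).pow_right _
    obtain ⟨r, hr1, hr0⟩ := Nat.chineseRemainder hcop 1 0
    have hPr : p ^ Nat.card H ∣ r := (Nat.modEq_zero_iff_dvd).mp hr0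
    set f : H →* H := powMonoidHom r with hf
    have hfx : f x = x := by
      have hxx : x ^ r = x ^ 1 := pow_eq_pow_iff_modEq.mpr (by simpa using hr1)
      simpa [hf, powMonoidHom_apply] using hxx
    have horder : ∀ z : H, ¬ p ∣ orderOf (z ^ r) := by
      intro z hdvd
      rw [orderOf_pow] at hdvd
      exact nat_aux hp (orderOf_dvd_natCard z) hc0 hPr hdvd
    have hpe : ¬ p ∣ Monoid.exponent f.range := by
      intro hdvd
      have hcard : p ∣ Nat.card f.range := hdvd.trans Group.exponent_dvd_nat_card
      obtain ⟨y, hy⟩ := exists_prime_orderOf_dvd_card' p hcard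
      obtain ⟨z, hz⟩ := y.2
      have hoy : orderOf (y : H) = p := by
        rw [← hy]
        exact orderOf_injective f.range.subtype Subtype.coe_injective y
      apply horder z
      have : f z = z ^ r := rfl
      rw [← this, hz, hoy]
    haveI : NeZero ((Monoid.exponent f.range : K)) :=
      ⟨fun h => hpe ((ringChar.spec K _).mp h)⟩
    have hxmem : x ∈ f.range := ⟨x, hfx⟩
    have hxne : (⟨x, hxmem⟩ : f.range) ≠ 1 := fun h => hx (congrArg Subtype.val h)
    obtain ⟨χ₀, hχ₀⟩ := CommGroup.exists_apply_ne_one_of_hasEnoughRootsOfUnity f.range K hxne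
    refine ⟨χ₀.comp f.rangeRestrict, ?_⟩
    have hres : f.rangeRestrict x = ⟨x, hxmem⟩ := Subtype.ext hfx
    simpa [MonoidHom.comp_apply, hres] using hχ₀
  · -- characteristic zero case
    have hne : ¬ ringChar K ∣ Monoid.exponent H := by
      rw [h0, zero_dvd_iff]
      exact Monoid.exponent_ne_zero_of_finite
    haveI : NeZero ((Monoid.exponent H : K)) := ⟨fun h => hne ((ringChar.spec K _).mp h)⟩
    exact CommGroup.exists_apply_ne_one_of_hasEnoughRootsOfUnity H K hx

/-- Let `G` act trivially on an algebraically closed field `K`, and let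
`1 → A → Γ → G → 1` be an extension with `A` finite abelian satisfying
`char(K) ∤ |A|`, `Hom_G(A,Kˣ) = Hom(A,Kˣ)` (every character of `A` is
`G`-equivariant), and such that the transgression `Hom_G(A,Kˣ) → H²(G,Kˣ)` is an
isomorphism.  Then the extension is stem: `A` is contained in the center of `Γ`
and in the commutator subgroup `[Γ,Γ]`. -/
theorem stem_of_twisted_representation_group
    {G K A Γ : Type*} [Group G] [Finite G] [Field K] [IsAlgClosed K]
    [CommGroup A] [Finite A] [Group Γ]
    (φ : G →* (K ≃+* K)) (htriv : ∀ g (x : K), φ g x = x)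
    (ι : A →* Γ) (π : Γ →* G)
    (hι : Function.Injective ι) (hπ : Function.Surjective π)
    (hker : ι.range = π.ker)
    (s : G → Γ) (hs : ∀ g, π (s g) = g)
    (β : G → G → A) (hβ : ∀ g h, s (g * h) = ι (β g h) * s g * s h)
    (act : G → A → A) (hact : ∀ g a, ι (act g a) = s g * ι a * (s g)⁻¹)
    (hchar : ¬ (ringChar K ∣ Nat.card A))
    (hHomG : ∀ lam : A →* Kˣ, ∀ g a, lam (act g a) = uAct φ g (lam a))
    (htra_inj : ∀ lam lam' : A →* Kˣ,
      (∀ g a, lam (act g a) = uAct φ g (lam a)) →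
      (∀ g a, lam' (act g a) = uAct φ g (lam' a)) →
      (∃ τ : G → Kˣ, ∀ g h, lam' (β g h) = lam (β g h) * d1 φ τ g h) → lam = lam')
    (htra_surj : ∀ α : G → G → Kˣ, IsCocycle2 φ α →
      ∃ lam : A →* Kˣ, (∀ g a, lam (act g a) = uAct φ g (lam a)) ∧
        ∃ τ : G → Kˣ, ∀ g h, α g h = lam (β g h) * d1 φ τ g h) :
    ∀ a : A, ι a ∈ Subgroup.center Γ ∧ ι a ∈ commutator Γ := by
  -- the action of `G` on `Kˣ` is trivial
  have huAct : ∀ (g : G) (u : Kˣ), uAct φ g u = u := by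
    intro g u
    refine Units.ext ?_
    simpa [uAct] using htriv g (u : K)
  -- `Γ` is finite
  haveI hkerfin : Finite π.ker := by
    rw [← hker]
    exact Finite.of_equiv A (MonoidHom.ofInjective hι).toEquiv
  haveI : Finite Γ := by
    have hinj : Function.Injective
        (fun γ : Γ => ((⟨γ * (s (π γ))⁻¹, by simp [MonoidHom.mem_ker, hs]⟩ : π.ker), π γ)) := by
      intro γ₁ γ₂ h
      have h1 : π γ₁ = π γ₂ := congrArg Prod.snd h
      have h2 : γ₁ * (s (π γ₁))⁻¹ = γ₂ * (s (π γ₂))⁻¹ :=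
        Subtype.ext_iff.mp (congrArg Prod.fst h)
      rw [h1] at h2
      exact mul_right_cancel h2
    exact Finite.of_injective _ hinj
  -- the conjugation action of `G` on `A` is trivial
  have hfix : ∀ g a, act g a = a := by
    intro g a
    by_contra hne
    have hy : act g a * a⁻¹ ≠ 1 := by
      intro h
      exact hne (by rwa [mul_inv_eq_one] at h)
    have hdvd : ¬ ringChar K ∣ orderOf (act g a * a⁻¹) :=
      fun h => hchar (h.trans (orderOf_dvd_natCard _))
    obtain ⟨χ, hχ⟩ := exists_char hy hdvd
    apply hχ
    rw [map_mul, map_inv, hHomG χ g a, huAct, mul_inv_cancel]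
  -- sections commute with `ι`
  have hcomm_s : ∀ g (a : A), s g * ι a = ι a * s g := by
    intro g a
    have h1 := hact g a
    rw [hfix g a] at h1
    exact mul_inv_eq_iff_eq_mul.mp h1.symm
  -- `ι a` is central
  have hcenter : ∀ a : A, ι a ∈ Subgroup.center Γ := by
    intro a
    rw [Subgroup.mem_center_iff]
    intro γ
    have hmem : γ * (s (π γ))⁻¹ ∈ ι.range := by
      rw [hker]
      simp [MonoidHom.mem_ker, hs]
    obtain ⟨b, hb⟩ := hmem
    have hγ : γ = ι b * s (π γ) := by rw [hb, inv_mul_cancel_right]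
    rw [hγ]
    have hab : ι b * ι a = ι a * ι b := by rw [← map_mul, ← map_mul, mul_comm]
    rw [mul_assoc, hcomm_s, ← mul_assoc, hab, mul_assoc]
  -- every homomorphism `Γ →* Kˣ` kills `ι A`
  have hkill : ∀ f : Γ →* Kˣ, ∀ b : A, f (ι b) = 1 := by
    intro f b
    have key : (1 : A →* Kˣ) = f.comp ι := by
      refine htra_inj 1 (f.comp ι) ?_ ?_ ?_
      · intro g a
        simp [huAct]
      · intro g a
        exact hHomG (f.comp ι) g a
      · refine ⟨fun g => (f (s g))⁻¹, fun g h => ?_⟩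
        have hβ' : ι (β g h) = s (g * h) * (s h)⁻¹ * (s g)⁻¹ := by
          rw [hβ g h]
          group
        simp only [MonoidHom.comp_apply, MonoidHom.one_apply, one_mul, d1, huAct, hβ',
          map_mul, map_inv, inv_inv]
        simp [mul_comm, mul_assoc, mul_left_comm]
    calc f (ι b) = (f.comp ι) b := rfl
    _ = (1 : A →* Kˣ) b := by rw [key]
    _ = 1 := rfl
  -- `ι a` lies in the commutator subgroup
  have hcommutator : ∀ a : A, ι a ∈ commutator Γ := by
    intro a
    by_contra hmem
    have hx : Abelianization.of (ι a) ≠ (1 : Abelianization Γ) := by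
      intro h
      exact hmem ((QuotientGroup.eq_one_iff _).mp h)
    have hdvd : ¬ ringChar K ∣ orderOf (Abelianization.of (ι a)) := by
      intro h
      apply hchar
      have h1 : orderOf (Abelianization.of (ι a)) ∣ orderOf (ι a) := orderOf_map_dvd _ _
      have h2 : orderOf (ι a) = orderOf a := orderOf_injective ι hι a
      exact h.trans (h1.trans (h2 ▸ orderOf_dvd_natCard a))
    obtain ⟨χ, hχ⟩ := exists_char hx hdvd
    exact hχ (hkill (χ.comp Abelianization.of) a)
  exact fun a => ⟨hcenter a, hcommutator a⟩
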